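/- Let $\varepsilon > 0$, $\alpha = 2\varepsilon^2$, and define $w(\eta) = \eta^{1+\alpha}$ for $\eta \in [0,1]$. Let $u : [-1,1] \to \mathbb{R}$ be $C^2$ with $-1 < u(x) \le 0$ and $0 \le u''(x) < 2$ for all $x$. Then for all $(x,\eta) \in (-1,1) \times (0,1)$, the quantity $(\mathcal{L}_u w)(x,\eta) := \frac{1+\varepsilon^2\eta^2 (u'(x))^2}{(1+u(x))^2} \alpha(1+\alpha)\eta^{\alpha-1} + \varepsilon^2 (1+\alpha) \eta^{1+\alpha} \left[ 2\left(\frac{u'(x)}{1+u(x)}\right)^2 - \frac{u''(x)}{1+u(x)} \right]$ is nonnegative. -/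

import Mathlib

open Set

/-- the barrier `w(η) = η^{1+α}` with `α = 2ε²` is a subsolution:
`𝓛_u w ≥ 0` on `(-1,1)×(0,1)`. -/
theorem stmt8 (ε : ℝ) (hε : 0 < ε) (α : ℝ) (hα : α = 2 * ε ^ 2)
    (u : ℝ → ℝ) (hu : ContDiff ℝ 2 u)
    (hrange : ∀ x ∈ Icc (-1:ℝ) 1, -1 < u x ∧ u x ≤ 0)
    (hconv : ∀ x ∈ Icc (-1:ℝ) 1, 0 ≤ deriv (deriv u) x ∧ deriv (deriv u) x < 2) :
    ∀ x ∈ Ioo (-1:ℝ) 1, ∀ η ∈ Ioo (0:ℝ) 1,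
      0 ≤ (1 + ε ^ 2 * η ^ 2 * (deriv u x) ^ 2) / (1 + u x) ^ 2 *
            (α * (1 + α) * η ^ (α - 1)) +
          ε ^ 2 * (1 + α) * η ^ (1 + α) *
            (2 * (deriv u x / (1 + u x)) ^ 2 - deriv (deriv u) x / (1 + u x)) := by
  intro x hx η hη
  have hx' : x ∈ Icc (-1:ℝ) 1 := ⟨hx.1.le, hx.2.le⟩
  obtain ⟨ha1, ha2⟩ := hrange x hx'
  obtain ⟨hc0, hc2⟩ := hconv x hx'
  obtain ⟨hη0, hη1⟩ := hη
  set s := 1 + u x with hs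
  have hspos : 0 < s := by simp only [hs]; linarith
  have hsle : s ≤ 1 := by simp only [hs]; linarith
  set d := deriv u x with hd
  set c := deriv (deriv u) x with hc
  set p := η ^ (α - 1) with hp
  set q := η ^ (1 + α) with hq
  have hαpos : 0 < α := by rw [hα]; positivity
  have hqpos : 0 < q := Real.rpow_pos_of_pos hη0 _
  have hqp : q ≤ p := Real.rpow_le_rpow_of_exponent_ge hη0 hη1.le (by linarith)
  have hcs : c * s ≤ 2 := by nlinarith
  have key : 0 ≤ (1 + ε^2*η^2*d^2) * (α*(1+α)*p) + ε^2*(1+α)*q*(2*d^2 - c*s) := by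
    have h1 : ε^2*(1+α)*q*(c*s) ≤ ε^2*(1+α)*q*2 := by
      apply mul_le_mul_of_nonneg_left hcs; positivity
    have h2 : ε^2*(1+α)*q*2 ≤ α*(1+α)*p := by
      have := mul_le_mul_of_nonneg_left hqp (by positivity : (0:ℝ) ≤ 2*ε^2*(1+α))
      rw [hα]; nlinarith
    have h3 : 0 ≤ (ε^2*η^2*d^2) * (α*(1+α)*p) := by
      have hppos : 0 < p := Real.rpow_pos_of_pos hη0 _
      positivity
    have h4 : 0 ≤ ε^2*(1+α)*q*(2*d^2) := by positivity
    nlinarith [h1, h2, h3, h4]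
  have heq : (1 + ε ^ 2 * η ^ 2 * d ^ 2) / s ^ 2 * (α * (1 + α) * p) +
      ε ^ 2 * (1 + α) * q * (2 * (d / s) ^ 2 - c / s)
      = ((1 + ε^2*η^2*d^2) * (α*(1+α)*p) + ε^2*(1+α)*q*(2*d^2 - c*s)) / s^2 := by
    field_simp
  rw [heq]
  exact div_nonneg key (sq_nonneg s)
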